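/- Let K ≥ 2, n ≥ 1, N = Kn, d ≥ 1, τ > 0. Suppose (W*, Q*) minimizes f̄ over OB(d,K) × OB(d,K). Define H* ∈ ℝ^{d×N} by setting its column indexed by (k,i) equal to the k-th column of Q* for every k ∈ {1,…,K} and i ∈ {1,…,n}. Then (W*, H*) minimizes f over OB(d,K) × OB(d,N). -/

import Mathlib

open scoped BigOperators Matrix

/-- Cross-entropy loss: `L_CE(z,k) = log (∑_ℓ exp (z_ℓ)) − z_k`. -/
noncomputable def LCE {K : ℕ} (z : Fin K → ℝ) (k : Fin K) : ℝ :=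
  Real.log (∑ ℓ, Real.exp (z ℓ)) - z k

/-- The oblique manifold: matrices all of whose columns have unit Euclidean norm. -/
def OB (p : ℕ) (ι : Type) [Fintype ι] : Set (Matrix (Fin p) ι ℝ) :=
  {M | ∀ j, ∑ i, (M i j) ^ 2 = 1}

/-- The cross-entropy risk `f(W,H) = (1/N) ∑_k ∑_i L_CE(τ Wᵀ h_{k,i}, k)` with `N = K n`. -/
noncomputable def ceRisk {d K n : ℕ} (τ : ℝ) (W : Matrix (Fin d) (Fin K) ℝ)
    (H : Matrix (Fin d) (Fin K × Fin n) ℝ) : ℝ :=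
  (1 / ((K : ℝ) * n)) * ∑ k : Fin K, ∑ i : Fin n,
    LCE (fun ℓ => τ * ∑ r, W r ℓ * H r (k, i)) k

/-- The reduced risk `f̄(W,Q) = (1/K) ∑_k L_CE(τ Wᵀ q_k, k)`. -/
noncomputable def fbar {d K : ℕ} (τ : ℝ) (W Q : Matrix (Fin d) (Fin K) ℝ) : ℝ :=
  (1 / (K : ℝ)) * ∑ k : Fin K, LCE (fun ℓ => τ * ∑ r, W r ℓ * Q r k) k

theorem min_fbar_gives_min_ceRisk (d K n : ℕ) (hK : 2 ≤ K) (hn : 1 ≤ n) (hd : 1 ≤ d)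
    (τ : ℝ) (hτ : 0 < τ)
    (Wstar Qstar : Matrix (Fin d) (Fin K) ℝ)
    (hWstar : Wstar ∈ OB d (Fin K)) (hQstar : Qstar ∈ OB d (Fin K))
    (hmin : ∀ W' Q' : Matrix (Fin d) (Fin K) ℝ, W' ∈ OB d (Fin K) → Q' ∈ OB d (Fin K) →
      fbar τ Wstar Qstar ≤ fbar τ W' Q')
    (Hstar : Matrix (Fin d) (Fin K × Fin n) ℝ)
    (hHstar : ∀ r k i, Hstar r (k, i) = Qstar r k) :
    ∀ (W' : Matrix (Fin d) (Fin K) ℝ) (H' : Matrix (Fin d) (Fin K × Fin n) ℝ),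
      W' ∈ OB d (Fin K) → H' ∈ OB d (Fin K × Fin n) →
      ceRisk τ Wstar Hstar ≤ ceRisk τ W' H' := by
  intro W' H' hW' hH'
  have hK0 : (K : ℝ) ≠ 0 := by
    have : (0:ℕ) < K := by omega
    exact_mod_cast this.ne'
  have hn0 : (n : ℝ) ≠ 0 := by
    have : (0:ℕ) < n := by omega
    exact_mod_cast this.ne'
  -- ceRisk at the candidate equals fbar
  have heq : ceRisk τ Wstar Hstar = fbar τ Wstar Qstar := by
    unfold ceRisk fbar
    simp only [hHstar, Finset.sum_const, Finset.card_univ, Fintype.card_fin,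
      nsmul_eq_mul, ← Finset.mul_sum]
    field_simp
  rw [heq]
  -- ceRisk of any feasible point is an average of fbar values
  have hdecomp : ceRisk τ W' H'
      = (1 / (n : ℝ)) * ∑ i : Fin n, fbar τ W' (Matrix.of fun r k => H' r (k, i)) := by
    unfold ceRisk fbar
    rw [Finset.sum_comm, Finset.mul_sum, Finset.mul_sum]
    refine Finset.sum_congr rfl fun i _ => ?_
    simp only [Matrix.of_apply, ← Finset.mul_sum]
    ring
  rw [hdecomp]
  have hbound : ∀ i : Fin n,
      fbar τ Wstar Qstar ≤ fbar τ W' (Matrix.of fun r k => H' r (k, i)) := by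
    intro i
    exact hmin _ _ hW' (fun k => hH' (k, i))
  calc fbar τ Wstar Qstar
      = (1 / (n : ℝ)) * ∑ _i : Fin n, fbar τ Wstar Qstar := by
        simp only [Finset.sum_const, Finset.card_univ, Fintype.card_fin, nsmul_eq_mul]
        field_simp
    _ ≤ (1 / (n : ℝ)) * ∑ i : Fin n, fbar τ W' (Matrix.of fun r k => H' r (k, i)) := by
        apply mul_le_mul_of_nonneg_left _ (by positivity)
        exact Finset.sum_le_sum fun i _ => hbound i
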